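/- If F ⊆ 2^[n] satisfies |F| ≥ (1+ε)·C(n,⌊n/2⌋), then F contains at least (1/10)·n·ε·|F| pairs of sets F₁ ⊊ F₂. -/

import Mathlib

open Finset
open scoped Nat

/-- Permutations intertwining two classifications correspond to families of fiber bijections. -/
def compatEquiv {α K : Type*} (p q : α → K) :
    {σ : Equiv.Perm α // ∀ x, q (σ x) = p x} ≃ ∀ k : K, {x // p x = k} ≃ {x // q x = k} where
  toFun σ k := Equiv.subtypeEquiv σ.1 (fun x => by rw [σ.2 x])
  invFun π := ⟨Equiv.ofFiberEquiv π, fun x => Equiv.ofFiberEquiv_map π x⟩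
  left_inv σ := by
    apply Subtype.ext; apply Equiv.ext; intro x
    rfl
  right_inv π := by
    funext k; apply Equiv.ext; rintro ⟨x, hx⟩
    apply Subtype.ext
    show ((Equiv.ofFiberEquiv fun k => _) x) = _
    subst hx
    rfl

lemma card_compat {α K : Type*} [Fintype α] [DecidableEq α] [Fintype K] [DecidableEq K]
    (p q : α → K) [∀ k, DecidablePred fun x => p x = k] [∀ k, DecidablePred fun x => q x = k]
    (h : ∀ k, Fintype.card {x // p x = k} = Fintype.card {x // q x = k}) :
    Fintype.card {σ : Equiv.Perm α // ∀ x, q (σ x) = p x}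
      = ∏ k, Nat.factorial (Fintype.card {x // p x = k}) := by
  rw [Fintype.card_congr (compatEquiv p q), Fintype.card_pi]
  exact Finset.prod_congr rfl fun k _ =>
    Fintype.card_equiv (Fintype.equivOfCardEq (h k))

variable {n : ℕ}

/-- `F` is an initial segment of the maximal chain determined by `σ`. -/
def inChain (σ : Equiv.Perm (Fin n)) (F : Finset (Fin n)) : Prop :=
  ∀ x, x ∈ F ↔ (σ x : ℕ) < F.card

instance (σ : Equiv.Perm (Fin n)) (F : Finset (Fin n)) : Decidable (inChain σ F) := by
  unfold inChain; infer_instance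

lemma fin_filter_card (P : ℕ → Prop) [DecidablePred P] :
    (univ.filter fun z : Fin n => P (z : ℕ)).card = ((range n).filter P).card := by
  rw [card_filter, card_filter, ← Fin.sum_univ_eq_sum_range (fun i => if P i then 1 else 0)]

set_option maxHeartbeats 1000000 in
lemma count_two {F G : Finset (Fin n)} (h : F ⊆ G) :
    (univ.filter fun σ : Equiv.Perm (Fin n) => inChain σ F ∧ inChain σ G).card
      = F.card ! * ((G.card - F.card)! * (n - G.card)!) := by
  classical
  set a := F.card with hadef
  set b := G.card with hbdef
  have hab : a ≤ b := card_le_card h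
  have hbn : b ≤ n := by simpa using card_le_card (subset_univ G)
  set p : Fin n → Bool × Bool := fun x => (decide (x ∈ F), decide (x ∈ G)) with hp
  set q : Fin n → Bool × Bool := fun z => (decide ((z : ℕ) < a), decide ((z : ℕ) < b)) with hq
  have hiff : ∀ σ : Equiv.Perm (Fin n),
      (inChain σ F ∧ inChain σ G) ↔ ∀ x, q (σ x) = p x := by
    intro σ
    constructor
    · rintro ⟨h1, h2⟩ x
      simp only [hp, hq, Prod.mk.injEq, decide_eq_decide]
      exact ⟨(h1 x).symm, (h2 x).symm⟩
    · intro hh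
      constructor <;> intro x <;>
        · have := hh x
          simp only [hp, hq, Prod.mk.injEq, decide_eq_decide] at this
          tauto
  -- fiber cardinalities
  have cardP : ∀ P : ℕ → Prop, ∀ _ : DecidablePred P,
      Fintype.card {z : Fin n // P (z : ℕ)} = ((range n).filter P).card := by
    intro P hP
    rw [Fintype.card_subtype, fin_filter_card]
  have fibTT : Fintype.card {x : Fin n // x ∈ F ∧ x ∈ G} = a := by
    rw [Fintype.card_subtype]
    have : (univ.filter fun x : Fin n => x ∈ F ∧ x ∈ G) = F := by
      ext x; simp only [mem_filter, mem_univ, true_and]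
      exact ⟨fun hx => hx.1, fun hx => ⟨hx, h hx⟩⟩
    rw [this]
  have fibTF : Fintype.card {x : Fin n // x ∈ F ∧ ¬ x ∈ G} = 0 := by
    rw [Fintype.card_eq_zero_iff]
    exact ⟨fun ⟨x, hx⟩ => hx.2 (h hx.1)⟩
  have fibFT : Fintype.card {x : Fin n // ¬ x ∈ F ∧ x ∈ G} = b - a := by
    rw [Fintype.card_subtype]
    have : (univ.filter fun x : Fin n => ¬ x ∈ F ∧ x ∈ G) = G \ F := by
      ext x; simp [mem_sdiff, and_comm]
    rw [this, card_sdiff_of_subset h]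
  have fibFF : Fintype.card {x : Fin n // ¬ x ∈ F ∧ ¬ x ∈ G} = n - b := by
    rw [Fintype.card_subtype]
    have : (univ.filter fun x : Fin n => ¬ x ∈ F ∧ ¬ x ∈ G) = Gᶜ := by
      ext x; simp only [mem_filter, mem_univ, true_and, mem_compl]
      exact ⟨fun hx => hx.2, fun hx => ⟨fun hxF => hx (h hxF), hx⟩⟩
    rw [this, card_compl, Fintype.card_fin]
  have qTT : Fintype.card {z : Fin n // ((z : ℕ) < a) ∧ ((z : ℕ) < b)} = a := by
    rw [cardP (fun z => z < a ∧ z < b) inferInstance]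
    have : ((range n).filter fun z => z < a ∧ z < b) = range a := by
      ext z; simp only [mem_filter, mem_range]; omega
    rw [this, card_range]
  have qTF : Fintype.card {z : Fin n // ((z : ℕ) < a) ∧ ¬ ((z : ℕ) < b)} = 0 := by
    rw [Fintype.card_eq_zero_iff]
    exact ⟨fun ⟨x, hx⟩ => hx.2 (lt_of_lt_of_le hx.1 hab)⟩
  have qFT : Fintype.card {z : Fin n // ¬ ((z : ℕ) < a) ∧ ((z : ℕ) < b)} = b - a := by
    rw [cardP (fun z => ¬ z < a ∧ z < b) inferInstance]
    have : ((range n).filter fun z => ¬ z < a ∧ z < b) = Ico a b := by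
      ext z; simp only [mem_filter, mem_range, mem_Ico]; omega
    rw [this, Nat.card_Ico]
  have qFF : Fintype.card {z : Fin n // ¬ ((z : ℕ) < a) ∧ ¬ ((z : ℕ) < b)} = n - b := by
    rw [cardP (fun z => ¬ z < a ∧ ¬ z < b) inferInstance]
    have : ((range n).filter fun z => ¬ z < a ∧ ¬ z < b) = Ico b n := by
      ext z; simp only [mem_filter, mem_range, mem_Ico]; omega
    rw [this, Nat.card_Ico]
  have hfib : ∀ k : Bool × Bool,
      Fintype.card {x : Fin n // p x = k} = Fintype.card {x : Fin n // q x = k} := by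
    rintro ⟨k1, k2⟩
    cases k1 <;> cases k2
    · rw [show Fintype.card {x : Fin n // p x = (false, false)}
            = Fintype.card {x : Fin n // ¬ x ∈ F ∧ ¬ x ∈ G} from
          Fintype.card_congr (Equiv.subtypeEquivRight fun x => by
            simp [hp, Prod.ext_iff]),
        show Fintype.card {x : Fin n // q x = (false, false)}
            = Fintype.card {z : Fin n // ¬ ((z : ℕ) < a) ∧ ¬ ((z : ℕ) < b)} from
          Fintype.card_congr (Equiv.subtypeEquivRight fun x => by
            simp [hq, Prod.ext_iff]),
        fibFF, qFF]
    · rw [show Fintype.card {x : Fin n // p x = (false, true)}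
            = Fintype.card {x : Fin n // ¬ x ∈ F ∧ x ∈ G} from
          Fintype.card_congr (Equiv.subtypeEquivRight fun x => by
            simp [hp, Prod.ext_iff]),
        show Fintype.card {x : Fin n // q x = (false, true)}
            = Fintype.card {z : Fin n // ¬ ((z : ℕ) < a) ∧ ((z : ℕ) < b)} from
          Fintype.card_congr (Equiv.subtypeEquivRight fun x => by
            simp [hq, Prod.ext_iff]),
        fibFT, qFT]
    · rw [show Fintype.card {x : Fin n // p x = (true, false)}
            = Fintype.card {x : Fin n // x ∈ F ∧ ¬ x ∈ G} from
          Fintype.card_congr (Equiv.subtypeEquivRight fun x => by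
            simp [hp, Prod.ext_iff]),
        show Fintype.card {x : Fin n // q x = (true, false)}
            = Fintype.card {z : Fin n // ((z : ℕ) < a) ∧ ¬ ((z : ℕ) < b)} from
          Fintype.card_congr (Equiv.subtypeEquivRight fun x => by
            simp [hq, Prod.ext_iff]),
        fibTF, qTF]
    · rw [show Fintype.card {x : Fin n // p x = (true, true)}
            = Fintype.card {x : Fin n // x ∈ F ∧ x ∈ G} from
          Fintype.card_congr (Equiv.subtypeEquivRight fun x => by
            simp [hp, Prod.ext_iff]),
        show Fintype.card {x : Fin n // q x = (true, true)}
            = Fintype.card {z : Fin n // ((z : ℕ) < a) ∧ ((z : ℕ) < b)} from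
          Fintype.card_congr (Equiv.subtypeEquivRight fun x => by
            simp [hq, Prod.ext_iff]),
        fibTT, qTT]
  have hfilter : (univ.filter fun σ : Equiv.Perm (Fin n) => inChain σ F ∧ inChain σ G)
      = univ.filter fun σ : Equiv.Perm (Fin n) => ∀ x, q (σ x) = p x := by
    apply filter_congr; intro σ _; exact hiff σ
  have key := card_compat p q hfib
  have key2 : (univ.filter fun σ : Equiv.Perm (Fin n) => ∀ x, q (σ x) = p x).card
      = ∏ k : Bool × Bool, Nat.factorial (Fintype.card {x : Fin n // p x = k}) := by
    rw [(Fintype.card_subtype _).symm]; convert key using 2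
  rw [hfilter]
  rw [key2]
  rw [Fintype.prod_prod_type (f := fun k : Bool × Bool => Nat.factorial (Fintype.card {x : Fin n // p x = k}))]
  simp only [Fintype.prod_bool]
  have e1 : Fintype.card {x : Fin n // p x = (true, true)} = a := by
    rw [← fibTT]; exact Fintype.card_congr (Equiv.subtypeEquivRight fun x => by
      simp [hp, Prod.ext_iff])
  have e2 : Fintype.card {x : Fin n // p x = (true, false)} = 0 := by
    rw [← fibTF]; exact Fintype.card_congr (Equiv.subtypeEquivRight fun x => by
      simp [hp, Prod.ext_iff])
  have e3 : Fintype.card {x : Fin n // p x = (false, true)} = b - a := by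
    rw [← fibFT]; exact Fintype.card_congr (Equiv.subtypeEquivRight fun x => by
      simp [hp, Prod.ext_iff])
  have e4 : Fintype.card {x : Fin n // p x = (false, false)} = n - b := by
    rw [← fibFF]; exact Fintype.card_congr (Equiv.subtypeEquivRight fun x => by
      simp [hp, Prod.ext_iff])
  rw [e1, e2, e3, e4]
  simp [Nat.factorial]

lemma inChain_total {σ : Equiv.Perm (Fin n)} {F G : Finset (Fin n)}
    (hF : inChain σ F) (hG : inChain σ G) : F ⊆ G ∨ G ⊆ F := by
  rcases le_total F.card G.card with h | h
  · exact Or.inl fun x hx => (hG x).2 (lt_of_lt_of_le ((hF x).1 hx) h)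
  · exact Or.inr fun x hx => (hF x).2 (lt_of_lt_of_le ((hG x).1 hx) h)

/-- window weights -/
def W (n j : ℕ) : ℕ := if j = 0 then 1 else n.choose j - n.choose (j - 1)

lemma sumW (n : ℕ) : ∀ t, t ≤ n / 2 → ∑ j ∈ range (t + 1), W n j = n.choose t := by
  intro t
  induction t with
  | zero => intro _; simp [W]
  | succ t ih =>
    intro ht
    have hmono : n.choose t ≤ n.choose (t + 1) :=
      Nat.choose_le_succ_of_lt_half_left (by omega)
    rw [Finset.sum_range_succ, ih (by omega)]
    simp only [W, Nat.add_sub_cancel]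
    have : ¬ (t + 1 = 0) := by omega
    rw [if_neg this]
    omega

lemma sumW_ite (n k' : ℕ) (hk : k' ≤ n / 2) :
    ∑ j ∈ range (n / 2 + 1), W n j * (if j ≤ k' then 1 else 0) = n.choose k' := by
  have h1 : ∀ j, W n j * (if j ≤ k' then 1 else 0) = if j ≤ k' then W n j else 0 := by
    intro j; split_ifs <;> simp
  rw [Finset.sum_congr rfl fun j _ => h1 j, ← Finset.sum_filter]
  have h2 : (range (n / 2 + 1)).filter (fun j => j ≤ k') = range (k' + 1) := by
    ext j; simp only [mem_filter, mem_range]; omega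
  rw [h2, sumW n k' hk]

def kk (n : ℕ) (F : Finset (Fin n)) : ℕ := min F.card (n - F.card)

def ind (F : Finset (Fin n)) (σ : Equiv.Perm (Fin n)) (j : ℕ) : ℕ :=
  if inChain σ F ∧ j ≤ kk n F then 1 else 0

lemma card_le' (F : Finset (Fin n)) : F.card ≤ n := by
  simpa using card_le_card (subset_univ F)

lemma per_pair {F G : Finset (Fin n)} (h : F ⊆ G) :
    ∑ σ : Equiv.Perm (Fin n), ∑ j ∈ range (n / 2 + 1), W n j * (ind F σ j * ind G σ j)
      = n.choose (min F.card (n - G.card))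
        * (F.card ! * ((G.card - F.card)! * (n - G.card)!)) := by
  have hbn := card_le' G
  have hab : F.card ≤ G.card := card_le_card h
  have hmin : min (kk n F) (kk n G) = min F.card (n - G.card) := by
    unfold kk; omega
  have hstep : ∀ σ : Equiv.Perm (Fin n), ∀ j,
      ind F σ j * ind G σ j
        = (if j ≤ min F.card (n - G.card) then 1 else 0)
          * (if inChain σ F ∧ inChain σ G then 1 else 0) := by
    intro σ j
    unfold ind
    have hminle : (j ≤ min F.card (n - G.card)) ↔ (j ≤ kk n F ∧ j ≤ kk n G) := by
      rw [← hmin]; exact le_min_iff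
    by_cases hc : inChain σ F ∧ inChain σ G
    · by_cases hj : j ≤ min F.card (n - G.card)
      · rw [if_pos ⟨hc.1, (hminle.mp hj).1⟩, if_pos ⟨hc.2, (hminle.mp hj).2⟩,
          if_pos hj, if_pos hc]
      · rw [if_neg hj]
        rcases not_and_or.mp (fun hh => hj (hminle.mpr hh)) with h' | h'
        · rw [if_neg (fun hh => h' hh.2)]; simp
        · rw [show (if inChain σ G ∧ j ≤ kk n G then 1 else 0) = 0 from
            if_neg (fun hh => h' hh.2)]; simp
    · rw [if_neg hc]
      rcases not_and_or.mp hc with h' | h'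
      · rw [if_neg (fun hh => h' hh.1)]; simp
      · rw [show (if inChain σ G ∧ j ≤ kk n G then 1 else 0) = 0 from
          if_neg (fun hh => h' hh.1)]; simp
  calc ∑ σ : Equiv.Perm (Fin n), ∑ j ∈ range (n / 2 + 1), W n j * (ind F σ j * ind G σ j)
      = ∑ j ∈ range (n / 2 + 1), ∑ σ : Equiv.Perm (Fin n),
          (W n j * (if j ≤ min F.card (n - G.card) then 1 else 0))
            * (if inChain σ F ∧ inChain σ G then 1 else 0) := by
        rw [Finset.sum_comm]
        exact Finset.sum_congr rfl fun j _ => Finset.sum_congr rfl fun σ _ => by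
          rw [hstep σ j]; ring
    _ = ∑ j ∈ range (n / 2 + 1), (W n j * (if j ≤ min F.card (n - G.card) then 1 else 0))
          * (F.card ! * ((G.card - F.card)! * (n - G.card)!)) := by
        refine Finset.sum_congr rfl fun j _ => ?_
        rw [← Finset.mul_sum, ← Finset.card_filter, count_two h]
    _ = n.choose (min F.card (n - G.card))
        * (F.card ! * ((G.card - F.card)! * (n - G.card)!)) := by
        rw [← Finset.sum_mul]
        rw [sumW_ite n _ (by omega)]

lemma ind_sq (F : Finset (Fin n)) (σ : Equiv.Perm (Fin n)) (j : ℕ) :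
    ind F σ j * ind F σ j = ind F σ j := by
  unfold ind; split_ifs <;> simp

lemma per_single (F : Finset (Fin n)) :
    ∑ σ : Equiv.Perm (Fin n), ∑ j ∈ range (n / 2 + 1), W n j * ind F σ j = n ! := by
  have h := per_pair (subset_refl F)
  simp only [ind_sq] at h
  rw [h]
  have han := card_le' F
  have hch : n.choose (min F.card (n - F.card)) = n.choose F.card := by
    rcases min_cases F.card (n - F.card) with ⟨he, _⟩ | ⟨he, _⟩
    · rw [he]
    · rw [he, Nat.choose_symm han]
  rw [hch, Nat.sub_self, Nat.factorial_zero, one_mul, ← mul_assoc,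
    Nat.choose_mul_factorial_mul_factorial han]

def XX (𝓕 : Finset (Finset (Fin n))) (σ : Equiv.Perm (Fin n)) (j : ℕ) : ℕ :=
  ∑ F ∈ 𝓕, ind F σ j

lemma idB (𝓕 : Finset (Finset (Fin n))) :
    ∑ σ : Equiv.Perm (Fin n), ∑ j ∈ range (n / 2 + 1), W n j * XX 𝓕 σ j
      = 𝓕.card * n ! := by
  unfold XX
  calc ∑ σ : Equiv.Perm (Fin n), ∑ j ∈ range (n / 2 + 1), W n j * ∑ F ∈ 𝓕, ind F σ j
      = ∑ σ : Equiv.Perm (Fin n), ∑ F ∈ 𝓕, ∑ j ∈ range (n / 2 + 1), W n j * ind F σ j := by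
        refine Finset.sum_congr rfl fun σ _ => ?_
        rw [Finset.sum_comm]
        exact Finset.sum_congr rfl fun j _ =>
          Finset.mul_sum 𝓕 (fun F => ind F σ j) (W n j)
    _ = ∑ F ∈ 𝓕, ∑ σ : Equiv.Perm (Fin n), ∑ j ∈ range (n / 2 + 1), W n j * ind F σ j :=
        Finset.sum_comm
    _ = ∑ F ∈ 𝓕, (n ! : ℕ) := Finset.sum_congr rfl fun F _ => per_single F
    _ = 𝓕.card * n ! := by rw [Finset.sum_const, smul_eq_mul]

lemma idC : ∑ σ : Equiv.Perm (Fin n), ∑ j ∈ range (n / 2 + 1), W n j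
    = n ! * n.choose (n / 2) := by
  have h1 : ∑ j ∈ range (n / 2 + 1), W n j = n.choose (n / 2) := sumW n (n / 2) le_rfl
  rw [Finset.sum_congr rfl fun (σ : Equiv.Perm (Fin n)) _ => h1, Finset.sum_const,
    smul_eq_mul, card_univ, Fintype.card_perm, Fintype.card_fin]

def vterm (n : ℕ) (p : Finset (Fin n) × Finset (Fin n)) : ℕ :=
  n.choose (min p.1.card (n - p.2.card))
    * (p.1.card ! * ((p.2.card - p.1.card)! * ((n - p.2.card)!)))

lemma g_eq (p : Finset (Fin n) × Finset (Fin n)) :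
    ∑ σ : Equiv.Perm (Fin n), ∑ j ∈ range (n / 2 + 1), W n j * (ind p.1 σ j * ind p.2 σ j)
      = (if p.1 = p.2 then n ! else 0) + ((if p.1 ⊂ p.2 then vterm n p else 0)
          + (if p.2 ⊂ p.1 then vterm n p.swap else 0)) := by
  obtain ⟨F, G⟩ := p
  simp only []
  by_cases heq : F = G
  · subst heq
    rw [if_pos rfl, if_neg (ssubset_irrefl F), if_neg (ssubset_irrefl F)]
    simp only [ind_sq, add_zero]
    exact per_single F
  · rw [if_neg heq]
    by_cases hlt : F ⊂ G
    · rw [if_pos hlt, if_neg (fun h => ssubset_irrefl F (hlt.trans h))]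
      simpa [vterm] using per_pair hlt.subset
    · rw [if_neg hlt]
      by_cases hgt : G ⊂ F
      · rw [if_pos hgt]
        have := per_pair (n := n) hgt.subset
        simp only [zero_add, add_zero]
        calc ∑ σ : Equiv.Perm (Fin n), ∑ j ∈ range (n / 2 + 1),
              W n j * (ind F σ j * ind G σ j)
            = ∑ σ : Equiv.Perm (Fin n), ∑ j ∈ range (n / 2 + 1),
              W n j * (ind G σ j * ind F σ j) := by
              refine Finset.sum_congr rfl fun σ _ => Finset.sum_congr rfl fun j _ => by ring
          _ = vterm n (F, G).swap := this
      · rw [if_neg hgt]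
        simp only [zero_add, add_zero]
        have hz : ∀ σ : Equiv.Perm (Fin n), ∀ j, ind F σ j * ind G σ j = 0 := by
          intro σ j
          unfold ind
          by_cases h1 : inChain σ F ∧ j ≤ kk n F
          · rw [if_pos h1]
            rw [if_neg]
            intro h2
            rcases inChain_total h1.1 h2.1 with hs | hs
            · exact absurd (Finset.ssubset_iff_subset_ne.mpr ⟨hs, heq⟩) hlt
            · exact absurd (Finset.ssubset_iff_subset_ne.mpr ⟨hs, fun h => heq h.symm⟩) hgt
          · rw [if_neg h1]; simp
        simp only [hz, mul_zero]
        simp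

lemma idA (𝓕 : Finset (Finset (Fin n))) :
    ∑ σ : Equiv.Perm (Fin n), ∑ j ∈ range (n / 2 + 1), W n j * (XX 𝓕 σ j * XX 𝓕 σ j)
      = 𝓕.card * n ! + 2 * ∑ p ∈ (𝓕 ×ˢ 𝓕).filter (fun p => p.1 ⊂ p.2), vterm n p := by
  have step1 : ∀ σ : Equiv.Perm (Fin n), ∀ j,
      XX 𝓕 σ j * XX 𝓕 σ j = ∑ p ∈ 𝓕 ×ˢ 𝓕, ind p.1 σ j * ind p.2 σ j := by
    intro σ j
    unfold XX
    rw [Finset.sum_mul_sum]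
    rw [Finset.sum_product]
  calc ∑ σ : Equiv.Perm (Fin n), ∑ j ∈ range (n / 2 + 1), W n j * (XX 𝓕 σ j * XX 𝓕 σ j)
      = ∑ σ : Equiv.Perm (Fin n), ∑ j ∈ range (n / 2 + 1), ∑ p ∈ 𝓕 ×ˢ 𝓕,
          W n j * (ind p.1 σ j * ind p.2 σ j) := by
        refine Finset.sum_congr rfl fun σ _ => Finset.sum_congr rfl fun j _ => ?_
        rw [step1 σ j, Finset.mul_sum (𝓕 ×ˢ 𝓕) (fun p => ind p.1 σ j * ind p.2 σ j) (W n j)]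
    _ = ∑ σ : Equiv.Perm (Fin n), ∑ p ∈ 𝓕 ×ˢ 𝓕, ∑ j ∈ range (n / 2 + 1),
          W n j * (ind p.1 σ j * ind p.2 σ j) :=
        Finset.sum_congr rfl fun σ _ => Finset.sum_comm
    _ = ∑ p ∈ 𝓕 ×ˢ 𝓕, ∑ σ : Equiv.Perm (Fin n), ∑ j ∈ range (n / 2 + 1),
          W n j * (ind p.1 σ j * ind p.2 σ j) := Finset.sum_comm
    _ = ∑ p ∈ 𝓕 ×ˢ 𝓕, ((if p.1 = p.2 then n ! else 0) + ((if p.1 ⊂ p.2 then vterm n p else 0)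
          + (if p.2 ⊂ p.1 then vterm n p.swap else 0))) :=
        Finset.sum_congr rfl fun p _ => g_eq p
    _ = 𝓕.card * n ! + 2 * ∑ p ∈ (𝓕 ×ˢ 𝓕).filter (fun p => p.1 ⊂ p.2), vterm n p := by
        rw [Finset.sum_add_distrib, Finset.sum_add_distrib]
        have hdiag : ∑ p ∈ 𝓕 ×ˢ 𝓕, (if p.1 = p.2 then (n ! : ℕ) else 0) = 𝓕.card * n ! := by
          rw [← Finset.sum_filter]
          rw [Finset.sum_const, smul_eq_mul]
          congr 1
          have himg : (𝓕 ×ˢ 𝓕).filter (fun p => p.1 = p.2)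
              = 𝓕.image (fun F => (F, F)) := by
            ext ⟨x, y⟩
            simp only [Finset.mem_filter, Finset.mem_product, Finset.mem_image,
              Prod.mk.injEq]
            constructor
            · rintro ⟨⟨hx, hy⟩, rfl⟩; exact ⟨x, hx, rfl, rfl⟩
            · rintro ⟨a, ha, rfl, rfl⟩; exact ⟨⟨ha, ha⟩, rfl⟩
          rw [himg, Finset.card_image_of_injective _ (fun a b hab => by
            simpa using hab)]
        have hlt : ∑ p ∈ 𝓕 ×ˢ 𝓕, (if p.1 ⊂ p.2 then vterm n p else 0)
            = ∑ p ∈ (𝓕 ×ˢ 𝓕).filter (fun p => p.1 ⊂ p.2), vterm n p :=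
          (Finset.sum_filter _ _).symm
        have hgt : ∑ p ∈ 𝓕 ×ˢ 𝓕, (if p.2 ⊂ p.1 then vterm n p.swap else 0)
            = ∑ p ∈ (𝓕 ×ˢ 𝓕).filter (fun p => p.1 ⊂ p.2), vterm n p := by
          rw [← Finset.sum_filter]
          refine Finset.sum_nbij' (i := Prod.swap) (j := Prod.swap) ?_ ?_ ?_ ?_ ?_
          · rintro ⟨x, y⟩ hp
            simp only [Finset.mem_filter, Finset.mem_product] at hp ⊢
            exact ⟨⟨hp.1.2, hp.1.1⟩, hp.2⟩
          · rintro ⟨x, y⟩ hp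
            simp only [Finset.mem_filter, Finset.mem_product] at hp ⊢
            exact ⟨⟨hp.1.2, hp.1.1⟩, hp.2⟩
          · intro p _; rfl
          · intro p _; rfl
          · intro p _; rfl
        rw [hdiag, hlt, hgt]
        ring

lemma le_choose : ∀ M : ℕ, ∀ r, 1 ≤ r → r < M → M ≤ M.choose r := by
  intro M
  induction M with
  | zero => intro r h1 h2; omega
  | succ M ih =>
    intro r h1 h2
    obtain ⟨k, rfl⟩ : ∃ k, r = k + 1 := ⟨r - 1, by omega⟩
    rw [Nat.choose_succ_succ]
    simp only [Nat.succ_eq_add_one]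
    by_cases hr : k + 1 < M
    · have h3 := ih (k + 1) h1 hr
      have h4 : 1 ≤ M.choose k := Nat.choose_pos (by omega)
      omega
    · have hkM : k + 1 = M := by omega
      have h1M : 1 ≤ M := by omega
      have e1 : M.choose k = M := by
        have : k = M - 1 := by omega
        subst this
        have : M - (M - 1) = 1 := by omega
        rw [← Nat.choose_symm (by omega : M - 1 ≤ M), this, Nat.choose_one_right]
      have e2 : M.choose (k + 1) = 1 := by rw [hkM, Nat.choose_self]
      omega

lemma pair_bound {F G : Finset (Fin n)} (h : F ⊂ G) (hbad : ¬(F.card = 0 ∧ G.card = n)) :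
    (n + 1) * vterm n (F, G) ≤ 2 * n ! := by
  have hab : F.card < G.card := card_lt_card h
  have hbn : G.card ≤ n := card_le' G
  unfold vterm
  simp only
  set a := F.card with ha
  set b := G.card with hb
  rcases le_or_gt a (n - b) with hc | hc
  · rw [min_eq_left hc]
    have hbn1 : b ≤ n - 1 := by
      by_contra hbcon
      exact hbad ⟨by omega, by omega⟩
    have hkey : (n + 1) ≤ 2 * ((n - a).choose (b - a)) := by
      have h1 : (n - a) ≤ (n - a).choose (b - a) :=
        le_choose (n - a) (b - a) (by omega) (by omega)
      omega
    have e1 : (n - a).choose (b - a) * (b - a)! * (n - a - (b - a))! = (n - a)! :=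
      Nat.choose_mul_factorial_mul_factorial (by omega)
    have e2 : n.choose a * a ! * (n - a)! = n ! :=
      Nat.choose_mul_factorial_mul_factorial (by omega)
    have e3 : n - a - (b - a) = n - b := by omega
    calc (n + 1) * (n.choose a * (a ! * ((b - a)! * (n - b)!)))
        ≤ (2 * ((n - a).choose (b - a))) * (n.choose a * (a ! * ((b - a)! * (n - b)!))) :=
          Nat.mul_le_mul_right _ hkey
      _ = 2 * (n.choose a * a ! * ((n - a).choose (b - a) * (b - a)! * (n - b)!)) := by ring
      _ = 2 * (n.choose a * a ! * ((n - a).choose (b - a) * (b - a)! * (n - a - (b - a))!)) := by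
          rw [e3]
      _ = 2 * (n.choose a * a ! * (n - a)!) := by rw [e1]
      _ = 2 * n ! := by rw [e2]
  · rw [min_eq_right (by omega)]
    have hkey : (n + 1) ≤ 2 * (b.choose a) := by
      have h1 : b ≤ b.choose a := le_choose b a (by omega) (by omega)
      omega
    have e1 : b.choose a * a ! * (b - a)! = b ! :=
      Nat.choose_mul_factorial_mul_factorial (by omega)
    have e2 : n.choose b * b ! * (n - b)! = n ! :=
      Nat.choose_mul_factorial_mul_factorial (by omega)
    calc (n + 1) * (n.choose (n - b) * (a ! * ((b - a)! * (n - b)!)))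
        = (n + 1) * (n.choose b * (a ! * ((b - a)! * (n - b)!))) := by
          rw [Nat.choose_symm hbn]
      _ ≤ (2 * (b.choose a)) * (n.choose b * (a ! * ((b - a)! * (n - b)!))) :=
          Nat.mul_le_mul_right _ hkey
      _ = 2 * (n.choose b * ((b.choose a * a ! * (b - a)!) * (n - b)!)) := by ring
      _ = 2 * (n.choose b * (b ! * (n - b)!)) := by rw [e1]
      _ = 2 * (n.choose b * b ! * (n - b)!) := by ring
      _ = 2 * n ! := by rw [e2]

lemma vbad : vterm n ((∅ : Finset (Fin n)), (univ : Finset (Fin n))) = n ! := by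
  unfold vterm
  simp [Finset.card_univ]

lemma U_lower (𝓕 : Finset (Finset (Fin n))) :
    (n ! : ℝ) * 𝓕.card * (𝓕.card - n.choose (n / 2))
      ≤ 2 * n.choose (n / 2)
        * ((∑ p ∈ (𝓕 ×ˢ 𝓕).filter (fun p => p.1 ⊂ p.2), vterm n p : ℕ) : ℝ) := by
  classical
  set s := (univ : Finset (Equiv.Perm (Fin n))) ×ˢ range (n / 2 + 1) with hs
  have hB : ∑ p ∈ s, W n p.2 * XX 𝓕 p.1 p.2 = 𝓕.card * n ! := by
    rw [hs, Finset.sum_product]; exact idB 𝓕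
  have hC : ∑ p ∈ s, W n p.2 = n ! * n.choose (n / 2) := by
    rw [hs, Finset.sum_product]; exact idC
  have hA : ∑ p ∈ s, W n p.2 * (XX 𝓕 p.1 p.2 * XX 𝓕 p.1 p.2)
      = 𝓕.card * n ! + 2 * ∑ p ∈ (𝓕 ×ˢ 𝓕).filter (fun p => p.1 ⊂ p.2), vterm n p := by
    rw [hs, Finset.sum_product]; exact idA 𝓕
  have hCS := Finset.sum_sq_le_sum_mul_sum_of_sq_eq_mul s
    (r := fun p => (W n p.2 : ℝ) * (XX 𝓕 p.1 p.2 : ℝ))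
    (f := fun p => (W n p.2 : ℝ))
    (g := fun p => (W n p.2 : ℝ) * ((XX 𝓕 p.1 p.2 : ℝ) * (XX 𝓕 p.1 p.2 : ℝ)))
    (fun p _ => by positivity) (fun p _ => by positivity) (fun p _ => by ring)
  have cB : ∑ p ∈ s, (W n p.2 : ℝ) * (XX 𝓕 p.1 p.2 : ℝ)
      = (𝓕.card : ℝ) * (n ! : ℝ) := by
    have : ∑ p ∈ s, (W n p.2 : ℝ) * (XX 𝓕 p.1 p.2 : ℝ)
        = ((∑ p ∈ s, W n p.2 * XX 𝓕 p.1 p.2 : ℕ) : ℝ) := by push_cast; rfl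
    rw [this, hB]; push_cast; ring
  have cC : ∑ p ∈ s, (W n p.2 : ℝ) = (n ! : ℝ) * (n.choose (n / 2) : ℝ) := by
    have : ∑ p ∈ s, (W n p.2 : ℝ) = ((∑ p ∈ s, W n p.2 : ℕ) : ℝ) := by push_cast; rfl
    rw [this, hC]; push_cast; ring
  have cA : ∑ p ∈ s, (W n p.2 : ℝ) * ((XX 𝓕 p.1 p.2 : ℝ) * (XX 𝓕 p.1 p.2 : ℝ))
      = (𝓕.card : ℝ) * (n ! : ℝ)
        + 2 * ((∑ p ∈ (𝓕 ×ˢ 𝓕).filter (fun p => p.1 ⊂ p.2), vterm n p : ℕ) : ℝ) := by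
    have : ∑ p ∈ s, (W n p.2 : ℝ) * ((XX 𝓕 p.1 p.2 : ℝ) * (XX 𝓕 p.1 p.2 : ℝ))
        = ((∑ p ∈ s, W n p.2 * (XX 𝓕 p.1 p.2 * XX 𝓕 p.1 p.2) : ℕ) : ℝ) := by push_cast; rfl
    rw [this, hA]; push_cast; ring
  rw [cB, cC, cA] at hCS
  have hf : (0 : ℝ) < (n ! : ℝ) := by
    exact_mod_cast Nat.factorial_pos n
  have key : (n ! : ℝ) * ((n ! : ℝ) * 𝓕.card * (𝓕.card - n.choose (n / 2)))
      ≤ (n ! : ℝ) * (2 * n.choose (n / 2)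
        * ((∑ p ∈ (𝓕 ×ˢ 𝓕).filter (fun p => p.1 ⊂ p.2), vterm n p : ℕ) : ℝ)) := by
    nlinarith [hCS]
  exact le_of_mul_le_mul_left key hf

set_option maxHeartbeats 1000000 in
/-- If `𝓕 ⊆ 2^[n]` has `|𝓕| ≥ (1+ε)·C(n,⌊n/2⌋)`, then there are at least
`(1/10)·n·ε·|𝓕|` pairs of sets `F₁ ⊊ F₂` in `𝓕` (each unordered pair `{F₁, F₂}` with
`F₁ ⊊ F₂` corresponds to exactly one ordered pair `(F₁, F₂)` with `F₁ ⊊ F₂`). -/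
theorem stmt_7 (n : ℕ) (ε : ℝ) (hε : 0 < ε) (𝓕 : Finset (Finset (Fin n)))
    (hcard : (1 + ε) * (n.choose (n / 2) : ℝ) ≤ (𝓕.card : ℝ)) :
    (1 / 10 : ℝ) * n * ε * (𝓕.card : ℝ) ≤
      (((𝓕 ×ˢ 𝓕).filter (fun p => p.1 ⊂ p.2)).card : ℝ) := by
  classical
  set Ps : Finset (Finset (Fin n) × Finset (Fin n)) := (𝓕 ×ˢ 𝓕).filter (fun p => p.1 ⊂ p.2)
    with hPs
  set Uℕ : ℕ := ∑ p ∈ Ps, vterm n p with hUdef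
  have hf : (0 : ℝ) < (n ! : ℝ) := by exact_mod_cast Nat.factorial_pos n
  have hC1 : 0 < n.choose (n / 2) := Nat.choose_pos (Nat.div_le_self n 2)
  have hCpos : (0 : ℝ) < (n.choose (n / 2) : ℝ) := by exact_mod_cast hC1
  have hm0 : (0 : ℝ) ≤ (𝓕.card : ℝ) := Nat.cast_nonneg _
  have hn0 : (0 : ℝ) ≤ (n : ℝ) := Nat.cast_nonneg _
  have hεm0 : (0 : ℝ) ≤ ε * 𝓕.card := mul_nonneg hε.le hm0
  have hεC : ε * (n.choose (n / 2) : ℝ) ≤ (𝓕.card : ℝ) - (n.choose (n / 2) : ℝ) := by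
    nlinarith [hcard]
  have hUlow := U_lower (n := n) 𝓕
  rw [← hPs, ← hUdef] at hUlow
  -- U ≥ n! * m * ε / 2 (in the form: n! * m * ε ≤ 2 * U)
  have hB : (n ! : ℝ) * (𝓕.card : ℝ) * ε ≤ 2 * (Uℕ : ℝ) := by
    have h1 : (n ! : ℝ) * (𝓕.card : ℝ) * (ε * (n.choose (n / 2) : ℝ))
        ≤ (n ! : ℝ) * (𝓕.card : ℝ) * ((𝓕.card : ℝ) - (n.choose (n / 2) : ℝ)) :=
      mul_le_mul_of_nonneg_left hεC (by positivity)
    have h2 : (n.choose (n / 2) : ℝ) * ((n ! : ℝ) * (𝓕.card : ℝ) * ε)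
        ≤ (n.choose (n / 2) : ℝ) * (2 * (Uℕ : ℝ)) := by nlinarith [h1, hUlow]
    exact le_of_mul_le_mul_left h2 hCpos
  by_cases hbad : ((∅ : Finset (Fin n)), (univ : Finset (Fin n))) ∈ Ps
  · -- the pair (∅, univ) is present
    have hP1 : 1 ≤ Ps.card := Finset.card_pos.mpr ⟨_, hbad⟩
    have hsplit : Uℕ = n ! + ∑ p ∈ Ps.erase ((∅ : Finset (Fin n)), (univ : Finset (Fin n))),
        vterm n p := by
      rw [hUdef, ← Finset.add_sum_erase Ps _ hbad, vbad]
    have hgood : ∀ p ∈ Ps.erase ((∅ : Finset (Fin n)), (univ : Finset (Fin n))),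
        (n + 1) * vterm n p ≤ 2 * n ! := by
      intro p hp
      obtain ⟨hpne, hpP⟩ := Finset.mem_erase.mp hp
      obtain ⟨hpm, hplt⟩ := Finset.mem_filter.mp hpP
      refine pair_bound hplt ?_
      rintro ⟨h0, hn'⟩
      apply hpne
      have e1 : p.1 = ∅ := Finset.card_eq_zero.mp h0
      have e2 : p.2 = univ := by
        apply Finset.eq_univ_of_card
        rw [hn', Fintype.card_fin]
      exact Prod.ext e1 e2
    have hsum : (n + 1) * Uℕ ≤ (n + 1) * n ! + 2 * n ! * (Ps.card - 1) := by
      rw [hsplit, Nat.mul_add]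
      have h1 : (n + 1) * ∑ p ∈ Ps.erase ((∅ : Finset (Fin n)), (univ : Finset (Fin n))),
          vterm n p ≤ 2 * n ! * (Ps.card - 1) := by
        rw [Finset.mul_sum]
        calc ∑ p ∈ Ps.erase ((∅ : Finset (Fin n)), (univ : Finset (Fin n))),
              (n + 1) * vterm n p
            ≤ ∑ _p ∈ Ps.erase ((∅ : Finset (Fin n)), (univ : Finset (Fin n))), 2 * n ! :=
              Finset.sum_le_sum hgood
          _ = (Ps.erase ((∅ : Finset (Fin n)), (univ : Finset (Fin n)))).card * (2 * n !) := by
              rw [Finset.sum_const, smul_eq_mul]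
          _ = 2 * n ! * (Ps.card - 1) := by
              rw [Finset.card_erase_of_mem hbad]; ring
      omega
    -- lower bound P ≥ 2m - 3
    have hmem := Finset.mem_filter.mp hbad
    have hmemp := Finset.mem_product.mp hmem.1
    have hemem : (∅ : Finset (Fin n)) ∈ 𝓕 := hmemp.1
    have humem : (univ : Finset (Fin n)) ∈ 𝓕 := hmemp.2
    have hn1 : 1 ≤ n := by
      by_contra hncon
      have hn0' : n = 0 := by omega
      subst hn0'
      have h2 := hmem.2
      rw [Finset.univ_eq_empty] at h2
      exact ssubset_irrefl _ h2
    have hP2m : 2 * 𝓕.card ≤ Ps.card + 3 := by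
      set A := (𝓕.erase ∅).image (fun F => ((∅ : Finset (Fin n)), F)) with hA
      set B := (𝓕.erase univ).image (fun F => (F, (univ : Finset (Fin n)))) with hBdef
      have hAP : A ⊆ Ps := by
        intro p hp
        obtain ⟨F, hF, rfl⟩ := Finset.mem_image.mp hp
        obtain ⟨hFne, hFm⟩ := Finset.mem_erase.mp hF
        refine Finset.mem_filter.mpr ⟨Finset.mem_product.mpr ⟨hemem, hFm⟩, ?_⟩
        exact Finset.ssubset_iff_subset_ne.mpr ⟨Finset.empty_subset F, fun h => hFne h.symm⟩
      have hBP : B ⊆ Ps := by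
        intro p hp
        obtain ⟨F, hF, rfl⟩ := Finset.mem_image.mp hp
        obtain ⟨hFne, hFm⟩ := Finset.mem_erase.mp hF
        refine Finset.mem_filter.mpr ⟨Finset.mem_product.mpr ⟨hFm, humem⟩, ?_⟩
        exact Finset.ssubset_univ_iff.mpr hFne
      have hcardA : A.card = 𝓕.card - 1 := by
        rw [hA, Finset.card_image_of_injective _ (fun a b hab => by simpa using hab),
          Finset.card_erase_of_mem hemem]
      have hcardB : B.card = 𝓕.card - 1 := by
        rw [hBdef, Finset.card_image_of_injective _ (fun a b hab => by simpa using hab),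
          Finset.card_erase_of_mem humem]
      have hABsub : A ∩ B ⊆ {((∅ : Finset (Fin n)), (univ : Finset (Fin n)))} := by
        intro p hp
        obtain ⟨hpA, hpB⟩ := Finset.mem_inter.mp hp
        obtain ⟨F, _, hNF⟩ := Finset.mem_image.mp hpA
        obtain ⟨G, _, hNG⟩ := Finset.mem_image.mp hpB
        rw [Finset.mem_singleton, ← hNG]
        have hFG : ((∅ : Finset (Fin n)), F) = (G, univ) := hNF.trans hNG.symm
        injection hFG with h1 h2
        rw [← h1]
      have hU := Finset.card_union_add_card_inter A B
      have hABle : (A ∩ B).card ≤ 1 := le_trans (Finset.card_le_card hABsub)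
        (by rw [Finset.card_singleton])
      have hUP : (A ∪ B).card ≤ Ps.card :=
        Finset.card_le_card (Finset.union_subset hAP hBP)
      have hm1 : 1 ≤ 𝓕.card := Finset.card_pos.mpr ⟨_, hemem⟩
      omega
    -- convert to reals
    have hsumR : ((n : ℝ) + 1) * (Uℕ : ℝ)
        ≤ ((n : ℝ) + 1) * (n ! : ℝ) + 2 * (n ! : ℝ) * ((Ps.card : ℝ) - 1) := by
      have := hsum
      have hc : ((((n + 1) * Uℕ) : ℕ) : ℝ)
          ≤ ((((n + 1) * n ! + 2 * n ! * (Ps.card - 1)) : ℕ) : ℝ) := Nat.cast_le.mpr hsum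
      push_cast [Nat.cast_sub hP1] at hc
      linarith [hc]
    have hmC : (n.choose (n / 2) : ℝ) + 1 ≤ (𝓕.card : ℝ) := by
      have h1 : (n.choose (n / 2) : ℝ) < (𝓕.card : ℝ) := by nlinarith [hcard, hCpos]
      have h2 : n.choose (n / 2) < 𝓕.card := by exact_mod_cast h1
      have h3 : n.choose (n / 2) + 1 ≤ 𝓕.card := h2
      exact_mod_cast h3
    have hCn : (n : ℝ) ≤ (n.choose (n / 2) : ℝ) := by
      have := Nat.choose_le_middle 1 n
      rw [Nat.choose_one_right] at this
      exact_mod_cast this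
    rcases le_or_gt 4 (ε * (𝓕.card : ℝ)) with h4 | h4
    · -- large excess case
      have hB2 : ((n : ℝ) + 1) * ((n ! : ℝ) * (𝓕.card : ℝ) * ε)
          ≤ ((n : ℝ) + 1) * (2 * (Uℕ : ℝ)) :=
        mul_le_mul_of_nonneg_left hB (by positivity)
      have c1 : (n ! : ℝ) * (((n : ℝ) + 1) * ((𝓕.card : ℝ) * ε))
          ≤ (n ! : ℝ) * (2 * ((n : ℝ) + 1) + 4 * (Ps.card : ℝ) - 4) := by
        nlinarith [hB2, hsumR]
      have c2 : ((n : ℝ) + 1) * ((𝓕.card : ℝ) * ε)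
          ≤ 2 * ((n : ℝ) + 1) + 4 * (Ps.card : ℝ) - 4 := le_of_mul_le_mul_left c1 hf
      have hint : (n : ℝ) * 4 ≤ (n : ℝ) * (ε * (𝓕.card : ℝ)) :=
        mul_le_mul_of_nonneg_left h4 hn0
      nlinarith [c2, hint, hεm0]
    · -- small excess case
      have hPR : 2 * (𝓕.card : ℝ) ≤ (Ps.card : ℝ) + 3 := by exact_mod_cast hP2m
      have hint : (n : ℝ) * (ε * (𝓕.card : ℝ)) ≤ (n : ℝ) * 4 :=
        mul_le_mul_of_nonneg_left h4.le hn0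
      have hn1R : (1 : ℝ) ≤ (n : ℝ) := by exact_mod_cast hn1
      nlinarith [hPR, hint, hmC, hCn, hn1R]
  · -- no bad pair
    have hgood : ∀ p ∈ Ps, (n + 1) * vterm n p ≤ 2 * n ! := by
      intro p hp
      obtain ⟨hpm, hplt⟩ := Finset.mem_filter.mp hp
      refine pair_bound hplt ?_
      rintro ⟨h0, hn'⟩
      apply hbad
      have e1 : p.1 = ∅ := Finset.card_eq_zero.mp h0
      have e2 : p.2 = univ := by
        apply Finset.eq_univ_of_card
        rw [hn', Fintype.card_fin]
      rw [show ((∅ : Finset (Fin n)), (univ : Finset (Fin n))) = p from (Prod.ext e1 e2).symm]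
      exact hp
    have hsum : (n + 1) * Uℕ ≤ 2 * n ! * Ps.card := by
      rw [hUdef, Finset.mul_sum]
      calc ∑ p ∈ Ps, (n + 1) * vterm n p
          ≤ ∑ _p ∈ Ps, 2 * n ! := Finset.sum_le_sum hgood
        _ = Ps.card * (2 * n !) := by rw [Finset.sum_const, smul_eq_mul]
        _ = 2 * n ! * Ps.card := by ring
    have hsumR : ((n : ℝ) + 1) * (Uℕ : ℝ) ≤ 2 * (n ! : ℝ) * (Ps.card : ℝ) := by
      exact_mod_cast hsum
    have hB2 : ((n : ℝ) + 1) * ((n ! : ℝ) * (𝓕.card : ℝ) * ε)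
        ≤ ((n : ℝ) + 1) * (2 * (Uℕ : ℝ)) :=
      mul_le_mul_of_nonneg_left hB (by positivity)
    have c1 : (n ! : ℝ) * (((n : ℝ) + 1) * ((𝓕.card : ℝ) * ε))
        ≤ (n ! : ℝ) * (4 * (Ps.card : ℝ)) := by
      nlinarith [hB2, hsumR]
    have c2 : ((n : ℝ) + 1) * ((𝓕.card : ℝ) * ε) ≤ 4 * (Ps.card : ℝ) :=
      le_of_mul_le_mul_left c1 hf
    nlinarith [c2, hεm0, mul_nonneg hn0 hεm0]
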